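/- The group of ℂ-linear automorphisms of ℂ² generated by γ₁(z₁,z₂) = (iz₁, -iz₂) and γ₃(z₁,z₂) = ((i+1)/2)·(i(z₁-z₂), -(z₁+z₂)) has order 24 (it is the binary tetrahedral group). -/
import Mathlib

open Complex

namespace BinTet
open Matrix GaussianInt Complex

abbrev Gm := Matrix (Fin 2) (Fin 2) GaussianInt
def Ag : Gm := !![⟨0,1⟩, 0; 0, ⟨0,-1⟩]
def Jg : Gm := !![0, 1; -1, 0]
def Cg : Gm := !![-1, 1; ⟨0,-1⟩, ⟨0,-1⟩]
def cg : GaussianInt := ⟨1,1⟩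
def Gnf (a : Fin 4) (b : Fin 2) (e : Fin 3) : Gm := Ag^(a:ℕ) * Jg^(b:ℕ) * Cg^(e:ℕ)

lemma L1 : ∀ (a : Fin 4) (b : Fin 2) (e : Fin 3), Ag * Gnf a b e = Gnf (a+1) b e := by decide

lemma L3 : ∀ (a : Fin 4) (b : Fin 2) (e : Fin 3), ∃ (a' : Fin 4) (b' : Fin 2) (e' : Fin 3),
    cg^(e':ℕ) • (Cg * Gnf a b e) = cg^((e:ℕ)+1) • Gnf a' b' e' := by decide

lemma L4 : ∀ (a a' : Fin 4) (b b' : Fin 2) (e e' : Fin 3),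
    cg^(e':ℕ) • Gnf a b e = cg^(e:ℕ) • Gnf a' b' e' → a = a' ∧ b = b' ∧ e = e' := by decide

lemma LA4 : Ag^4 = 1 := by decide
lemma LC3 : cg^0 • Cg^3 = cg^3 • (1 : Gm) := by decide
lemma LJ : cg^0 • (Cg * Ag * Cg * Cg) = cg^3 • Jg := by decide

noncomputable def φm : Gm →+* Matrix (Fin 2) (Fin 2) ℂ := GaussianInt.toComplex.mapMatrix

lemma φm_apply (M : Gm) (i j : Fin 2) : φm M i j = toComplex (M i j) := rfl

lemma φm_inj : Function.Injective φm := by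
  intro X Y h
  funext i j
  exact GaussianInt.toComplex_injective (congrFun (congrFun h i) j)

lemma φm_smul (c : GaussianInt) (M : Gm) : φm (c • M) = (toComplex c) • φm M := by
  ext i j
  simp [φm_apply, Matrix.smul_apply, smul_eq_mul, _root_.map_mul]

lemma hz : toComplex cg = 1 + I := by
  simp [cg, toComplex_def]

lemma hzne : (1 + I : ℂ) ≠ 0 := by
  intro h
  simpa using congrArg Complex.im h

noncomputable def u : ℂ := (1 + I)⁻¹

lemma huz : u * (1 + I) = 1 := inv_mul_cancel₀ hzne

lemma lift {m n : ℕ} {X Y : Gm} (h : cg^m • X = cg^n • Y) :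
    u^n • φm X = u^m • φm Y := by
  have h' := congrArg φm h
  rw [φm_smul, φm_smul, map_pow, map_pow, hz] at h'
  have h2 : u^n • (u^m • ((1+I:ℂ)^m • φm X)) = u^n • (u^m • ((1+I:ℂ)^n • φm Y)) := by rw [h']
  rw [smul_smul, smul_smul, smul_smul, smul_smul] at h2
  calc u^n • φm X = (u^n * (u^m * (1+I)^m)) • φm X := by
        rw [← mul_pow, huz, one_pow, mul_one]
    _ = (u^n * u^m * (1+I)^m) • φm X := by ring_nf
    _ = (u^n * u^m * (1+I)^n) • φm Y := h2
    _ = (u^m * (u^n * (1+I)^n)) • φm Y := by ring_nf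
    _ = u^m • φm Y := by rw [← mul_pow, huz, one_pow, mul_one]

lemma liftback {m n : ℕ} {X Y : Gm} (h : u^n • φm X = u^m • φm Y) :
    cg^m • X = cg^n • Y := by
  apply φm_inj
  rw [φm_smul, φm_smul, map_pow, map_pow, hz]
  have h2 : ((1+I:ℂ)^m * (1+I)^n) • (u^n • φm X) = ((1+I:ℂ)^m * (1+I)^n) • (u^m • φm Y) := by
    rw [h]
  rw [smul_smul, smul_smul] at h2
  calc (1+I:ℂ)^m • φm X = ((1+I:ℂ)^m * ((1+I)^n * u^n)) • φm X := by
        rw [← mul_pow, mul_comm (1+I:ℂ), huz, one_pow, mul_one]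
    _ = ((1+I:ℂ)^m * (1+I)^n * u^n) • φm X := by ring_nf
    _ = ((1+I:ℂ)^m * (1+I)^n * u^m) • φm Y := h2
    _ = ((1+I:ℂ)^n * ((1+I)^m * u^m)) • φm Y := by ring_nf
    _ = (1+I:ℂ)^n • φm Y := by
        rw [← mul_pow, mul_comm (1+I:ℂ), huz, one_pow, mul_one]

end BinTet

open BinTet in
/-- the group of ℂ-linear automorphisms of `ℂ²` generated by
`γ₁(z₁,z₂) = (iz₁, -iz₂)` and `γ₃(z₁,z₂) = ((i+1)/2)·(i(z₁-z₂), -(z₁+z₂))`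
has order 24 (the binary tetrahedral group). -/
theorem binary_tetrahedral_order
    (g1 g3 : GL (Fin 2) ℂ)
    (hg1 : (g1 : Matrix (Fin 2) (Fin 2) ℂ) = !![I, 0; 0, -I])
    (hg3 : (g3 : Matrix (Fin 2) (Fin 2) ℂ) = ((I + 1) / 2) • !![I, -I; -1, -1]) :
    Nat.card (Subgroup.closure ({g1, g3} : Set (GL (Fin 2) ℂ))) = 24 := by
  -- matrix identifications
  have hA : (g1 : Matrix (Fin 2) (Fin 2) ℂ) = φm Ag := by
    rw [hg1]
    funext i j
    fin_cases i <;> fin_cases j <;>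
      simp [φm_apply, Ag, GaussianInt.toComplex_def]
  have hC : (g3 : Matrix (Fin 2) (Fin 2) ℂ) = u • φm Cg := by
    rw [hg3]
    have hsmul : ∀ X Y : Matrix (Fin 2) (Fin 2) ℂ, (1+I) • X = (1+I) • Y → X = Y := by
      intro X Y h
      simpa [smul_smul, inv_mul_cancel₀ hzne] using congrArg (fun M => (1+I:ℂ)⁻¹ • M) h
    apply hsmul
    rw [smul_smul, smul_smul, u, mul_inv_cancel₀ hzne, one_smul]
    have hcoef : (1+I) * ((I + 1) / 2) = I := by
      linear_combination (1/2 : ℂ) * Complex.I_sq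
    rw [hcoef]
    funext i j
    fin_cases i <;> fin_cases j <;>
      simp [φm_apply, Cg, GaussianInt.toComplex_def, Matrix.smul_apply, Complex.I_mul_I]
  -- key coercion facts
  have hJw : ((g3*g1*g3*g3 : GL (Fin 2) ℂ) : Matrix (Fin 2) (Fin 2) ℂ) = φm Jg := by
    have h0 := lift LJ
    simp only [pow_zero, one_smul] at h0
    rw [Units.val_mul, Units.val_mul, Units.val_mul, hA, hC]
    have h0' : u^3 • (φm Cg * φm Ag * φm Cg * φm Cg) = φm Jg := by
      simpa only [_root_.map_mul] using h0
    simp only [smul_mul_assoc, mul_smul_comm, smul_smul]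
    convert h0' using 2
    ring
  -- normal forms
  set w : GL (Fin 2) ℂ := g3*g1*g3*g3 with hw
  set F : Fin 4 → Fin 2 → Fin 3 → GL (Fin 2) ℂ :=
    fun a b e => g1^(a:ℕ) * w^(b:ℕ) * g3^(e:ℕ) with hFdef
  have hF : ∀ a b e, ((F a b e : GL (Fin 2) ℂ) : Matrix (Fin 2) (Fin 2) ℂ)
      = u^(e:ℕ) • φm (Gnf a b e) := by
    intro a b e
    rw [hFdef]
    simp only [Units.val_mul, Units.val_pow_eq_pow_val, hA, hJw, hC]
    rw [smul_pow, ← map_pow, ← map_pow, ← map_pow, mul_smul_comm, ← _root_.map_mul,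
      ← _root_.map_mul, Gnf]
  -- generator multiplication steps
  have step1 : ∀ a b e, g1 * F a b e = F (a+1) b e := by
    intro a b e
    apply Units.ext
    rw [Units.val_mul, hA, hF, hF, mul_smul_comm, ← _root_.map_mul, L1]
  have step3 : ∀ a b e, ∃ a' b' e', g3 * F a b e = F a' b' e' := by
    intro a b e
    obtain ⟨a', b', e', h⟩ := L3 a b e
    refine ⟨a', b', e', Units.ext ?_⟩
    rw [Units.val_mul, hC, hF, hF, smul_mul_assoc, mul_smul_comm, smul_smul,
      show u * u^(e:ℕ) = u^((e:ℕ)+1) from (pow_succ' u (e:ℕ)).symm, ← _root_.map_mul]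
    exact lift h
  -- orders of generators
  have h4 : g1^4 = 1 := by
    apply Units.ext
    rw [Units.val_pow_eq_pow_val, hA, ← map_pow, LA4, _root_.map_one, Units.val_one]
  have h3 : g3^3 = 1 := by
    apply Units.ext
    have h0 := lift LC3
    simp only [pow_zero, one_smul, _root_.map_one] at h0
    rw [Units.val_pow_eq_pow_val, hC, smul_pow, ← map_pow, h0, Units.val_one]
  have hinv1 : g1⁻¹ = g1^3 :=
    inv_eq_of_mul_eq_one_right (by rw [← pow_succ']; exact h4)
  have hinv3 : g3⁻¹ = g3^2 :=
    inv_eq_of_mul_eq_one_right (by rw [← pow_succ']; exact h3)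
  -- the 24-element parametrization
  set Ff : Fin 4 × Fin 2 × Fin 3 → GL (Fin 2) ℂ := fun t => F t.1 t.2.1 t.2.2 with hFf
  have hmem : ∀ x ∈ ({g1, g3} : Set (GL (Fin 2) ℂ)), ∀ g, g ∈ Set.range Ff →
      x * g ∈ Set.range Ff := by
    rintro x hx g ⟨⟨a, b, e⟩, rfl⟩
    rcases hx with rfl | rfl
    · exact ⟨(a+1, b, e), (step1 a b e).symm⟩
    · obtain ⟨a', b', e', h⟩ := step3 a b e
      exact ⟨(a', b', e'), h.symm⟩
  have hrange : ((Subgroup.closure ({g1, g3} : Set (GL (Fin 2) ℂ))) : Set (GL (Fin 2) ℂ))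
      = Set.range Ff := by
    apply Set.Subset.antisymm
    · intro g hg
      induction hg using Subgroup.closure_induction_left with
      | one => exact ⟨(0, 0, 0), by simp [hFf, hFdef]⟩
      | mul_left x hx y _ ih => exact hmem x hx y ih
      | inv_mul_cancel x hx y _ ih =>
        have hpow : ∀ (k : ℕ) (z : GL (Fin 2) ℂ), z ∈ Set.range Ff →
            x ^ k * z ∈ Set.range Ff := by
          intro k
          induction k with
          | zero => intro z hz; rwa [pow_zero, one_mul]
          | succ n ihn =>
            intro z hz
            rw [pow_succ', mul_assoc]
            exact hmem x hx _ (ihn z hz)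
        have hk : ∃ k : ℕ, x⁻¹ = x ^ k := by
          rcases hx with rfl | rfl
          exacts [⟨3, hinv1⟩, ⟨2, hinv3⟩]
        obtain ⟨k, hk⟩ := hk
        rw [hk]
        exact hpow k y ih
    · rintro g ⟨⟨a, b, e⟩, rfl⟩
      have m1 : g1 ∈ Subgroup.closure ({g1, g3} : Set (GL (Fin 2) ℂ)) :=
        Subgroup.subset_closure (Set.mem_insert _ _)
      have m3 : g3 ∈ Subgroup.closure ({g1, g3} : Set (GL (Fin 2) ℂ)) :=
        Subgroup.subset_closure (Set.mem_insert_of_mem _ rfl)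
      exact mul_mem (mul_mem (pow_mem m1 _)
        (pow_mem (mul_mem (mul_mem (mul_mem m3 m1) m3) m3) _)) (pow_mem m3 _)
  have hinj : Function.Injective Ff := by
    rintro ⟨a, b, e⟩ ⟨a', b', e'⟩ h
    have h' := congrArg (fun g : GL (Fin 2) ℂ => (g : Matrix (Fin 2) (Fin 2) ℂ)) h
    simp only [hFf] at h'
    rw [hF, hF] at h'
    obtain ⟨h1, h2, h3⟩ := L4 a a' b b' e e' (liftback h')
    simp [h1, h2, h3]
  rw [← SetLike.coe_sort_coe, hrange, Nat.card_range_of_injective hinj]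
  simp [Nat.card_eq_fintype_card]
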